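/- Let (yᵢ) and (zᵢ) be normalized basic sequences with basis constant 2 in a Banach space X with ∑ᵢ ‖yᵢ - zᵢ‖ < ∞. Let (y'ₖ) be a normalized block basic sequence of (yᵢ), and let z'ₖ be the vector with the same coordinates with respect to (zᵢ) as y'ₖ has with respect to (yᵢ). Then z'ₖ ≠ 0 for all but finitely many k, and ∑ₖ ‖y'ₖ - z'ₖ/‖z'ₖ‖‖ < ∞ (after discarding finitely many terms). -/

import Mathlib

open Filter Topology

noncomputable section

variable {E F : Type*}

def IsInfDimClosed [NormedAddCommGroup E] [NormedSpace ℂ E] (M : Submodule ℂ E) : Prop :=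
  IsClosed (M : Set E) ∧ ¬ FiniteDimensional ℂ M

def HI (E : Type*) [NormedAddCommGroup E] [NormedSpace ℂ E] : Prop :=
  ∀ M N : Submodule ℂ E, IsInfDimClosed M → IsInfDimClosed N → ∀ ε > 0,
    ∃ u ∈ M, ∃ v ∈ N, ‖u‖ = 1 ∧ ‖v‖ = 1 ∧ ‖u - v‖ ≤ ε

def StrictlySingular [NormedAddCommGroup E] [NormedSpace ℂ E]
    [NormedAddCommGroup F] [NormedSpace ℂ F] (S : E →L[ℂ] F) : Prop :=
  ∀ M : Submodule ℂ E, IsInfDimClosed M → ∀ c > 0, ∃ x ∈ M, ‖S x‖ < c * ‖x‖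

def IsNBasic2 [NormedAddCommGroup E] [NormedSpace ℂ E] (y : ℕ → E) : Prop :=
  (∀ i, ‖y i‖ = 1) ∧ ∀ (a : ℕ → ℂ) (m n : ℕ), m ≤ n →
    ‖∑ i ∈ Finset.range m, a i • y i‖ ≤ 2 * ‖∑ i ∈ Finset.range n, a i • y i‖

def IsBlockOf [NormedAddCommGroup E] [NormedSpace ℂ E] (w z : ℕ → E) : Prop :=
  ∃ (a : ℕ → ℂ) (F : ℕ → Finset ℕ), (∀ k, (F k).Nonempty) ∧
    (∀ k i j, i ∈ F k → j ∈ F (k+1) → i < j) ∧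
    (∀ k, w k = ∑ i ∈ F k, a i • z i) ∧ (∀ k, w k ≠ 0)

def IsNBlockOf [NormedAddCommGroup E] [NormedSpace ℂ E] (w z : ℕ → E) : Prop :=
  IsBlockOf w z ∧ ∀ k, ‖w k‖ = 1

def cSpan [NormedAddCommGroup E] [NormedSpace ℂ E] (y : ℕ → E) : Submodule ℂ E :=
  (Submodule.span ℂ (Set.range y)).topologicalClosure

def tailSpan [NormedAddCommGroup E] [NormedSpace ℂ E] (y : ℕ → E) (k : ℕ) : Submodule ℂ E :=
  cSpan (fun i => y (i + k))

theorem mem_cSpan [NormedAddCommGroup E] [NormedSpace ℂ E] (y : ℕ → E) (i : ℕ) :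
    y i ∈ cSpan y :=
  (Submodule.span ℂ (Set.range y)).le_topologicalClosure (Submodule.subset_span ⟨i, rfl⟩)

theorem tailSpan_le [NormedAddCommGroup E] [NormedSpace ℂ E] (y : ℕ → E) (k : ℕ) :
    tailSpan y k ≤ cSpan y :=
  Submodule.topologicalClosure_mono (Submodule.span_mono (by rintro _ ⟨i, rfl⟩; exact ⟨i + k, rfl⟩))

def inclCLM [NormedAddCommGroup E] [NormedSpace ℂ E] {M N : Submodule ℂ E} (h : M ≤ N) :
    M →L[ℂ] N :=
  LinearMap.mkContinuous (Submodule.inclusion h) 1 (by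
    intro x
    simp [Submodule.inclusion])

theorem statement4 {X : Type*} [NormedAddCommGroup X] [NormedSpace ℂ X] [CompleteSpace X]
    (y z : ℕ → X) (hy : IsNBasic2 y) (hz : IsNBasic2 z)
    (hsim : Summable fun i => ‖y i - z i‖)
    (a : ℕ → ℂ) (F : ℕ → Finset ℕ) (hF : ∀ k, (F k).Nonempty)
    (hsucc : ∀ k i j, i ∈ F k → j ∈ F (k + 1) → i < j)
    (y' : ℕ → X) (hy'def : ∀ k, y' k = ∑ i ∈ F k, a i • y i)
    (hy'norm : ∀ k, ‖y' k‖ = 1)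
    (z' : ℕ → X) (hz'def : ∀ k, z' k = ∑ i ∈ F k, a i • z i) :
    ∃ N : ℕ, (∀ k ≥ N, z' k ≠ 0) ∧
      Summable (fun k => ‖y' (k + N) - (‖z' (k + N)‖⁻¹ : ℝ) • z' (k + N)‖) := by
  -- coefficient bound
  have hbound : ∀ k, ∀ i ∈ F k, ‖a i‖ ≤ 4 := by
    intro k i hi
    set b : ℕ → ℂ := fun j => if j ∈ F k then a j else 0 with hb
    obtain ⟨M, hM⟩ : ∃ M, ∀ j ∈ F k, j < M :=
      ⟨(F k).max' (hF k) + 1, fun j hj => Nat.lt_succ_of_le ((F k).le_max' j hj)⟩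
    have hsum : ∑ j ∈ Finset.range M, b j • y j = y' k := by
      rw [hy'def]
      have : ∀ j, b j • y j = if j ∈ F k then a j • y j else 0 := by
        intro j; by_cases h : j ∈ F k <;> simp [hb, h]
      simp_rw [this]
      rw [Finset.sum_ite_mem]
      congr 1
      exact Finset.inter_eq_right.mpr (fun j hj => Finset.mem_range.mpr (hM j hj))
    have hpar : ∀ m, m ≤ M → ‖∑ j ∈ Finset.range m, b j • y j‖ ≤ 2 := by
      intro m hm
      calc ‖∑ j ∈ Finset.range m, b j • y j‖
          ≤ 2 * ‖∑ j ∈ Finset.range M, b j • y j‖ := hy.2 b m M hm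
        _ = 2 := by rw [hsum, hy'norm]; norm_num
    have hiM : i < M := hM i hi
    have hdiff : b i • y i =
        (∑ j ∈ Finset.range (i + 1), b j • y j) - ∑ j ∈ Finset.range i, b j • y j := by
      rw [Finset.sum_range_succ]; abel
    have : ‖b i • y i‖ ≤ 4 := by
      rw [hdiff]
      calc ‖_ - _‖ ≤ ‖∑ j ∈ Finset.range (i + 1), b j • y j‖ +
            ‖∑ j ∈ Finset.range i, b j • y j‖ := norm_sub_le _ _
        _ ≤ 2 + 2 := add_le_add (hpar _ hiM) (hpar _ (le_of_lt hiM))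
        _ = 4 := by norm_num
    rw [norm_smul, hy.1, mul_one] at this
    simpa [hb, hi] using this
  -- distance bound per block
  set g : ℕ → ℝ := fun k => ∑ i ∈ F k, ‖y i - z i‖ with hg
  set d : ℕ → ℝ := fun k => ‖y' k - z' k‖ with hd
  have hdle : ∀ k, d k ≤ 4 * g k := by
    intro k
    have : y' k - z' k = ∑ i ∈ F k, a i • (y i - z i) := by
      rw [hy'def, hz'def, ← Finset.sum_sub_distrib]
      exact Finset.sum_congr rfl fun i _ => (smul_sub _ _ _).symm
    rw [hd]
    calc ‖y' k - z' k‖ = ‖∑ i ∈ F k, a i • (y i - z i)‖ := by rw [this]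
      _ ≤ ∑ i ∈ F k, ‖a i • (y i - z i)‖ := norm_sum_le _ _
      _ = ∑ i ∈ F k, ‖a i‖ * ‖y i - z i‖ := by simp [norm_smul]
      _ ≤ ∑ i ∈ F k, 4 * ‖y i - z i‖ :=
          Finset.sum_le_sum fun i hi =>
            mul_le_mul_of_nonneg_right (hbound k i hi) (norm_nonneg _)
      _ = 4 * g k := by rw [hg, Finset.mul_sum]
  -- blocks are disjoint
  have hlt : ∀ l k, k < l → ∀ i ∈ F k, ∀ j ∈ F l, i < j := by
    intro l
    induction l with
    | zero => intro k hk; omega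
    | succ l ih =>
      intro k hk i hi j hj
      rcases Nat.lt_succ_iff_lt_or_eq.mp hk with h | h
      · obtain ⟨m, hm⟩ := hF l
        exact (ih k h i hi m hm).trans (hsucc l m j hm hj)
      · subst h; exact hsucc k i j hi hj
  have hdisj : ∀ k l : ℕ, k ≠ l → Disjoint (F k) (F l) := by
    intro k l hkl
    rw [Finset.disjoint_left]
    intro i hik hil
    rcases lt_or_gt_of_ne hkl with h | h
    · exact lt_irrefl i (hlt l k h i hik i hil)
    · exact lt_irrefl i (hlt k l h i hil i hik)
  -- summability of g
  have hgsum : Summable g := by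
    apply summable_of_sum_range_le (c := ∑' i, ‖y i - z i‖)
      (fun k => Finset.sum_nonneg fun i _ => norm_nonneg _)
    intro n
    rw [← Finset.sum_biUnion (fun k _ l _ hkl => hdisj k l hkl)]
    exact Summable.sum_le_tsum _ (fun i _ => norm_nonneg _) hsim
  have hdsum : Summable d :=
    Summable.of_nonneg_of_le (fun k => norm_nonneg _) hdle (hgsum.mul_left 4)
  -- tail where d is small
  have hd0 : Tendsto d atTop (𝓝 0) := hdsum.tendsto_atTop_zero
  obtain ⟨N, hN⟩ : ∃ N, ∀ k ≥ N, d k < 1 / 2 := by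
    have := (hd0.eventually (eventually_lt_nhds (by norm_num : (0:ℝ) < 1/2))).exists_forall_of_atTop
    exact ⟨this.choose, fun k hk => this.choose_spec k hk⟩
  have hznorm : ∀ k ≥ N, (1:ℝ)/2 ≤ ‖z' k‖ := by
    intro k hk
    have h1 : ‖y' k‖ - ‖z' k‖ ≤ ‖y' k - z' k‖ := norm_sub_norm_le _ _
    have h2 : ‖y' k - z' k‖ < 1 / 2 := hN k hk
    rw [hy'norm] at h1
    linarith
  refine ⟨N, fun k hk => by
    have := hznorm k hk
    intro h; rw [h, norm_zero] at this; linarith, ?_⟩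
  -- final summable comparison
  have hbound2 : ∀ k, ‖y' (k + N) - (‖z' (k + N)‖⁻¹ : ℝ) • z' (k + N)‖ ≤ 2 * d (k + N) := by
    intro k
    set v := z' (k + N) with hv
    have hr : (1:ℝ)/2 ≤ ‖v‖ := hznorm (k + N) (Nat.le_add_left N k)
    have hrpos : 0 < ‖v‖ := lt_of_lt_of_le (by norm_num) hr
    have key : ‖v - (‖v‖⁻¹ : ℝ) • v‖ = |‖v‖ - 1| := by
      have : v - (‖v‖⁻¹ : ℝ) • v = ((1 - ‖v‖⁻¹ : ℝ)) • v := by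
        rw [sub_smul, one_smul]
      rw [this, norm_smul, Real.norm_eq_abs]
      rw [← abs_of_pos hrpos, ← abs_mul]
      congr 1
      field_simp
      rw [abs_of_pos hrpos]; ring
    have h2 : |‖v‖ - 1| ≤ d (k + N) := by
      have := abs_norm_sub_norm_le v (y' (k + N))
      rw [hy'norm] at this
      calc |‖v‖ - 1| ≤ ‖v - y' (k + N)‖ := this
        _ = ‖y' (k + N) - v‖ := norm_sub_rev _ _
        _ = d (k + N) := rfl
    calc ‖y' (k + N) - (‖v‖⁻¹ : ℝ) • v‖
        ≤ ‖y' (k + N) - v‖ + ‖v - (‖v‖⁻¹ : ℝ) • v‖ := by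
          have : y' (k + N) - (‖v‖⁻¹ : ℝ) • v =
              (y' (k + N) - v) + (v - (‖v‖⁻¹ : ℝ) • v) := by abel
          rw [this]; exact norm_add_le _ _
      _ ≤ d (k + N) + d (k + N) := add_le_add le_rfl (key ▸ h2)
      _ = 2 * d (k + N) := by ring
  have htail : Summable fun k => d (k + N) := (summable_nat_add_iff N).mpr hdsum
  exact Summable.of_nonneg_of_le (fun k => norm_nonneg _) hbound2 (htail.mul_left 2)
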